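/- arXiv:math/0701593 — 3 statements merged into one kernel-verified Lean document; each statement's English description precedes it below -/
import Mathlib

section
/- For every δ > 0, ω > 0 and t₀ ∈ ℝ, the function t ↦ cos(ω(t + t₀))·x_h'(t)² is integrable on ℝ and ∫_{−∞}^{∞} cos(ω(t + t₀))·x_h'(t)² dt = (6π/5)·ω·(δ² − ω⁴)·cos(ω t₀)/(δ²·sinh(πω/√δ)). -/
open MeasureTheory

open Real in
noncomputable def lgs (s t : ℝ) : ℝ := (1 + Real.exp (-(s*t)))⁻¹

lemma lgs_mem (s t : ℝ) : lgs s t ∈ Set.Ioo (0:ℝ) 1 := by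
  have h := Real.exp_pos (-(s*t))
  constructor
  · rw [lgs]; positivity
  · rw [lgs, inv_lt_one_iff₀]
    right; linarith

lemma lgs_hasDeriv (s t : ℝ) : HasDerivAt (lgs s) (s * (lgs s t * (1 - lgs s t))) t := by
  have h1 : HasDerivAt (fun t : ℝ => -(s*t)) (-s) t := by
    exact ((hasDerivAt_id t).const_mul s).neg.congr_deriv (by simp)
  have h2 : HasDerivAt (fun t : ℝ => 1 + Real.exp (-(s*t))) (Real.exp (-(s*t)) * (-s)) t :=
    (h1.exp).const_add 1
  have h3 : (1 + Real.exp (-(s*t))) ≠ 0 := by have := Real.exp_pos (-(s*t)); positivity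
  have h4 := h2.inv h3
  refine h4.congr_deriv ?_
  have hE := Real.exp_pos (-(s*t))
  unfold lgs
  field_simp
  ring

lemma lgs_strictMono {s : ℝ} (hs : 0 < s) : StrictMono (lgs s) := by
  intro a b hab
  rw [lgs, lgs]
  have h1 : Real.exp (-(s*b)) < Real.exp (-(s*a)) := by
    apply Real.exp_lt_exp.2; nlinarith
  have h2 := Real.exp_pos (-(s*b))
  apply inv_strictAnti₀ (by positivity) (by linarith)

lemma lgs_range {s : ℝ} (hs : 0 < s) : lgs s '' Set.univ = Set.Ioo (0:ℝ) 1 := by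
  rw [Set.image_univ]
  apply Set.Subset.antisymm
  · rintro _ ⟨t, rfl⟩; exact lgs_mem s t
  · rintro y ⟨hy0, hy1⟩
    refine ⟨-(Real.log (y⁻¹ - 1))/s, ?_⟩
    have hy0' : (0:ℝ) < y⁻¹ - 1 := by
      have : 1 < y⁻¹ := (one_lt_inv₀ hy0).2 hy1
      linarith
    rw [lgs]
    have : -(s * (-(Real.log (y⁻¹ - 1))/s)) = Real.log (y⁻¹ - 1) := by
      field_simp
    rw [this, Real.exp_log hy0']
    field_simp
    ring

lemma one_add_cosh_pos (v : ℝ) : 0 < 1 + Real.cosh v := by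
  have := Real.cosh_pos v; linarith

lemma xh_deriv (s : ℝ) (x : ℝ → ℝ)
    (hx : ∀ t, x t = 1 - 3 / (1 + Real.cosh (s * t))) (t : ℝ) :
    deriv x t = 3 * s * Real.sinh (s*t) / (1 + Real.cosh (s*t))^2 := by
  have hxe : x = fun t => 1 - 3 / (1 + Real.cosh (s * t)) := funext hx
  subst hxe
  have h1 : HasDerivAt (fun t : ℝ => s*t) s t := by
    simpa using (hasDerivAt_id t).const_mul s
  have h2 : HasDerivAt (fun t : ℝ => 1 + Real.cosh (s*t)) (Real.sinh (s*t) * s) t :=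
    ((Real.hasDerivAt_cosh (s*t)).comp t h1).const_add 1
  have h3 : (1 + Real.cosh (s*t)) ≠ 0 := (one_add_cosh_pos _).ne'
  have h4 := ((h2.inv h3).const_mul 3).const_sub 1
  have h5 : HasDerivAt (fun t : ℝ => 1 - 3 / (1 + Real.cosh (s*t)))
      (-(3 * (-(Real.sinh (s*t) * s) / (1 + Real.cosh (s*t)) ^ 2))) t := by
    exact h4.congr_of_eventuallyEq (Filter.Eventually.of_forall fun y => by simp [div_eq_mul_inv])
  rw [h5.deriv]
  field_simp

lemma alg_id (v : ℝ) :
    (Real.sinh v)^2 / (1 + Real.cosh v)^4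
      = 4 * ((1 + Real.exp (-v))⁻¹ * (1 - (1 + Real.exp (-v))⁻¹) * (1 - 2*(1 + Real.exp (-v))⁻¹))^2 := by
  have hE : Real.exp (-v) = (Real.exp v)⁻¹ := by rw [Real.exp_neg]
  have hEp := Real.exp_pos v
  have hc : (1 + Real.cosh v) ≠ 0 := (one_add_cosh_pos v).ne'
  have h1 : (1 + (Real.exp v)⁻¹) ≠ 0 := by positivity
  rw [Real.sinh_eq, Real.cosh_eq, hE] at *
  field_simp
  ring

lemma lgs_log {s : ℝ} (t : ℝ) : Real.log (lgs s t) - Real.log (1 - lgs s t) = s*t := by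
  have hE := Real.exp_pos (-(s*t))
  have hg := lgs_mem s t
  have h0 : lgs s t ≠ 0 := hg.1.ne'
  have h1 : 1 - lgs s t ≠ 0 := by have := hg.2; intro h; nlinarith [hg.2]
  rw [← Real.log_div h0 h1]
  have hdiv : lgs s t / (1 - lgs s t) = Real.exp (s*t) := by
    rw [lgs]
    rw [Real.exp_neg] at hE ⊢
    have hEp := Real.exp_pos (s*t)
    field_simp
    ring
  rw [hdiv, Real.log_exp]

-- pointwise change of variables identity
lemma cov_pointwise (δ ω : ℝ) (hδ : 0 < δ) (hω : 0 < ω) (x : ℝ → ℝ)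
    (hx : ∀ t, x t = 1 - 3 / (1 + Real.cosh (Real.sqrt δ * t))) (t : ℝ) :
    |Real.sqrt δ * (lgs (Real.sqrt δ) t * (1 - lgs (Real.sqrt δ) t))| •
      ((lgs (Real.sqrt δ) t : ℂ) ^ (Complex.I * (ω / Real.sqrt δ) + 1)
        * (1 - (lgs (Real.sqrt δ) t : ℂ)) ^ (1 - Complex.I * (ω / Real.sqrt δ))
        * (1 - 2 * (lgs (Real.sqrt δ) t : ℂ))^2)
    = ((Real.sqrt δ / (36*δ) : ℝ) : ℂ) * (Complex.exp (Complex.I*(ω*t)) * ((deriv x t)^2 : ℝ)) := by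
  set s := Real.sqrt δ with hs_def
  have hs : 0 < s := Real.sqrt_pos.2 hδ
  have hs2 : s^2 = δ := Real.sq_sqrt hδ.le
  set c : ℂ := Complex.I * (ω / s) with hc_def
  set g : ℝ := lgs s t with hg_def
  have hg := lgs_mem s t
  have hg0 : (0:ℝ) < g := hg.1
  have hg1 : g < 1 := hg.2
  have hgc0 : (g:ℂ) ≠ 0 := by exact_mod_cast hg0.ne'
  have hgc1 : (1:ℂ) - g ≠ 0 := by
    have : ((1 - g : ℝ):ℂ) ≠ 0 := by exact_mod_cast (by linarith : (1:ℝ) - g ≠ 0)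
    push_cast at this; exact this
  -- the exponential identity
  have hexp : (g:ℂ)^c * ((1:ℂ)-g)^(-c) = Complex.exp (Complex.I*(ω*t)) := by
    rw [Complex.cpow_def_of_ne_zero hgc0, Complex.cpow_def_of_ne_zero hgc1,
      ← Complex.exp_add]
    congr 1
    have hl1 : Complex.log (g:ℂ) = (Real.log g : ℂ) := (Complex.ofReal_log hg0.le).symm
    have hl2 : Complex.log ((1:ℂ)-g) = (Real.log (1-g) : ℂ) := by
      rw [show ((1:ℂ)-g) = ((1-g:ℝ):ℂ) by push_cast; ring]
      exact (Complex.ofReal_log (by linarith)).symm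
    rw [hl1, hl2]
    have hlog : Real.log g - Real.log (1 - g) = s*t := lgs_log t
    have hsne : (s:ℂ) ≠ 0 := by exact_mod_cast hs.ne'
    rw [hc_def]
    rw [show (Real.log g : ℂ) * (Complex.I * (ω/s)) + (Real.log (1-g):ℂ) * (-(Complex.I * (ω/s)))
        = ((Real.log g - Real.log (1-g) : ℝ):ℂ) * (Complex.I * (ω/s)) by push_cast; ring]
    rw [hlog]
    push_cast
    field_simp
  -- split the cpows
  have h1 : (g:ℂ)^(c+1) = (g:ℂ)^c * g := by
    rw [Complex.cpow_add _ _ hgc0, Complex.cpow_one]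
  have h2 : ((1:ℂ)-g)^(1-c) = ((1:ℂ)-g)^(-c) * (1-g) := by
    rw [show (1:ℂ)-c = -c+1 by ring, Complex.cpow_add _ _ hgc1, Complex.cpow_one]
  rw [h1, h2]
  -- the derivative squared
  have hder : (deriv x t)^2 = 36 * δ * (g * (1-g) * (1-2*g))^2 := by
    rw [xh_deriv s x hx t]
    have h3 : (3 * s * Real.sinh (s*t) / (1 + Real.cosh (s*t))^2)^2
        = 9 * s^2 * ((Real.sinh (s*t))^2 / (1 + Real.cosh (s*t))^4) := by
      have := (one_add_cosh_pos (s*t)).ne'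
      field_simp
      ring
    rw [h3, alg_id (s*t), hs2]
    rw [hg_def, lgs]
    ring
  -- positivity of the jacobian
  have hjac : |s * (g * (1 - g))| = s * (g * (1-g)) := by
    apply abs_of_pos; have : (0:ℝ) < 1 - g := by linarith
    positivity
  rw [hjac, hder]
  rw [Complex.real_smul]
  push_cast
  rw [← hexp]
  have hδc : (δ:ℂ) ≠ 0 := by exact_mod_cast hδ.ne'
  field_simp

section Beta
open Complex in
lemma term_integrableOn (u : ℂ) (hu : 0 < u.re) (v : ℂ) (hv : 0 < v.re) :
    IntegrableOn (fun y : ℝ => (y:ℂ)^(u-1) * (1-(y:ℂ))^(v-1)) (Set.Ioo 0 1) := by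
  have h := Complex.betaIntegral_convergent hu hv
  have h2 := (intervalIntegrable_iff_integrableOn_Ioc_of_le zero_le_one).1 h
  exact h2.mono_set Set.Ioo_subset_Ioc_self

open Complex in
lemma term_integral (u : ℂ) (v : ℂ) :
    ∫ y in Set.Ioo (0:ℝ) 1, (y:ℂ)^(u-1) * (1-(y:ℂ))^(v-1) = Complex.betaIntegral u v := by
  rw [Complex.betaIntegral, intervalIntegral.integral_of_le zero_le_one,
    integral_Ioc_eq_integral_Ioo]

open Complex in
lemma F_eqOn (c : ℂ) : Set.EqOn
    (fun y : ℝ => (y:ℂ)^(c+1) * (1-(y:ℂ))^(1-c) * (1-2*(y:ℂ))^2)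
    (fun y : ℝ => ((y:ℂ)^((c+2)-1) * (1-(y:ℂ))^((2-c)-1)
      - 4 * ((y:ℂ)^((c+3)-1) * (1-(y:ℂ))^((2-c)-1))
      + 4 * ((y:ℂ)^((c+4)-1) * (1-(y:ℂ))^((2-c)-1))))
    (Set.Ioo 0 1) := by
  intro y hy
  simp only
  have hy0 : (y:ℂ) ≠ 0 := by exact_mod_cast hy.1.ne'
  have e1 : (c+2)-1 = c+1 := by ring
  have e2 : (c+3)-1 = (c+1)+1 := by ring
  have e3 : (c+4)-1 = (c+1)+2 := by ring
  have e4 : (2-c)-1 = 1-c := by ring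
  have t2 : (y:ℂ)^((c+1)+1) = (y:ℂ)^(c+1) * y := by
    rw [Complex.cpow_add _ _ hy0, Complex.cpow_one]
  have t3 : (y:ℂ)^((c+1)+2) = (y:ℂ)^(c+1) * (y:ℂ)^(2:ℕ) := by
    rw [Complex.cpow_add _ _ hy0, show (2:ℂ) = ((2:ℕ):ℂ) by norm_num, Complex.cpow_natCast]
  rw [e1, e2, e3, e4, t2, t3]
  ring

open Complex in
lemma F_integrableOn (c : ℂ) (hre : c.re = 0) :
    IntegrableOn (fun y : ℝ => (y:ℂ)^(c+1) * (1-(y:ℂ))^(1-c) * (1-2*(y:ℂ))^2)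
      (Set.Ioo (0:ℝ) 1) := by
  have hu2 : 0 < (c+2).re := by simp [hre]
  have hu3 : 0 < (c+3).re := by simp [hre]
  have hu4 : 0 < (c+4).re := by simp [hre]
  have hv : 0 < ((2:ℂ)-c).re := by simp [hre]
  have h : IntegrableOn (fun y : ℝ => ((y:ℂ)^((c+2)-1) * (1-(y:ℂ))^((2-c)-1)
      - 4 * ((y:ℂ)^((c+3)-1) * (1-(y:ℂ))^((2-c)-1))
      + 4 * ((y:ℂ)^((c+4)-1) * (1-(y:ℂ))^((2-c)-1)))) (Set.Ioo 0 1) :=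
    ((term_integrableOn _ hu2 _ hv).sub
      (((term_integrableOn _ hu3 _ hv)).const_mul 4)).add
      (((term_integrableOn _ hu4 _ hv)).const_mul 4)
  exact h.congr_fun (F_eqOn c).symm measurableSet_Ioo

open Complex in
lemma beta_eval (c : ℂ) (hre : c.re = 0) :
    ∫ y in Set.Ioo (0:ℝ) 1, (y:ℂ)^(c+1) * (1-(y:ℂ))^(1-c) * (1-2*(y:ℂ))^2
      = Complex.Gamma (c+2) * Complex.Gamma (2-c) * (c^2+1) / 30 := by
  have hu2 : 0 < (c+2).re := by simp [hre]
  have hu3 : 0 < (c+3).re := by simp [hre]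
  have hu4 : 0 < (c+4).re := by simp [hre]
  have hv : 0 < ((2:ℂ)-c).re := by simp [hre]
  rw [setIntegral_congr_fun measurableSet_Ioo (F_eqOn c)]
  have hG1 : IntegrableOn (fun y : ℝ => ((y:ℂ)^((c+2)-1) * (1-(y:ℂ))^((2-c)-1)
      - 4 * ((y:ℂ)^((c+3)-1) * (1-(y:ℂ))^((2-c)-1)))) (Set.Ioo 0 1) :=
    (term_integrableOn _ hu2 _ hv).sub (((term_integrableOn _ hu3 _ hv)).const_mul 4)
  have hG2 : IntegrableOn (fun y : ℝ =>
      (4:ℂ) * ((y:ℂ)^((c+4)-1) * (1-(y:ℂ))^((2-c)-1))) (Set.Ioo 0 1) :=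
    ((term_integrableOn _ hu4 _ hv)).const_mul 4
  rw [integral_add hG1 hG2,
    integral_sub (term_integrableOn _ hu2 _ hv)
      (((term_integrableOn _ hu3 _ hv)).const_mul 4),
    integral_const_mul, integral_const_mul,
    term_integral _ _, term_integral _ _, term_integral _ _]
  have g4 : Complex.Gamma 4 = 6 := by
    rw [show (4:ℂ) = ((3:ℕ):ℂ)+1 by norm_num, Complex.Gamma_nat_eq_factorial]; norm_num [Nat.factorial]
  have g5 : Complex.Gamma 5 = 24 := by
    rw [show (5:ℂ) = ((4:ℕ):ℂ)+1 by norm_num, Complex.Gamma_nat_eq_factorial]; norm_num [Nat.factorial]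
  have g6 : Complex.Gamma 6 = 120 := by
    rw [show (6:ℂ) = ((5:ℕ):ℂ)+1 by norm_num, Complex.Gamma_nat_eq_factorial]; norm_num [Nat.factorial]
  have hb2 : Complex.Gamma (c+2) * Complex.Gamma (2-c) = 6 * Complex.betaIntegral (c+2) (2-c) := by
    rw [Complex.Gamma_mul_Gamma_eq_betaIntegral hu2 hv, show c+2+(2-c) = 4 by ring, g4]
  have hb3 : Complex.Gamma (c+3) * Complex.Gamma (2-c) = 24 * Complex.betaIntegral (c+3) (2-c) := by
    rw [Complex.Gamma_mul_Gamma_eq_betaIntegral hu3 hv, show c+3+(2-c) = 5 by ring, g5]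
  have hb4 : Complex.Gamma (c+4) * Complex.Gamma (2-c) = 120 * Complex.betaIntegral (c+4) (2-c) := by
    rw [Complex.Gamma_mul_Gamma_eq_betaIntegral hu4 hv, show c+4+(2-c) = 6 by ring, g6]
  have hg3 : Complex.Gamma (c+3) = (c+2) * Complex.Gamma (c+2) := by
    rw [show c+3 = (c+2)+1 by ring, Complex.Gamma_add_one _ (by
      intro h; have := congrArg Complex.re h; simp [hre] at this)]
  have hg4 : Complex.Gamma (c+4) = (c+3) * Complex.Gamma (c+3) := by
    rw [show c+4 = (c+3)+1 by ring, Complex.Gamma_add_one _ (by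
      intro h; have := congrArg Complex.re h; simp [hre] at this)]
  have e2 : Complex.betaIntegral (c+2) (2-c) = Complex.Gamma (c+2) * Complex.Gamma (2-c) / 6 := by
    linear_combination -hb2 / 6
  have e3 : Complex.betaIntegral (c+3) (2-c) = (c+2) * Complex.Gamma (c+2) * Complex.Gamma (2-c) / 24 := by
    rw [hg3] at hb3; linear_combination -hb3 / 24
  have e4 : Complex.betaIntegral (c+4) (2-c) = (c+3) * (c+2) * Complex.Gamma (c+2) * Complex.Gamma (2-c) / 120 := by
    rw [hg4, hg3] at hb4; linear_combination -hb4 / 120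
  rw [e2, e3, e4]
  ring
end Beta

lemma gamma_eval (a : ℝ) (ha : 0 < a) :
    Complex.Gamma (Complex.I*a+2) * Complex.Gamma (2-Complex.I*a) * ((Complex.I*a)^2+1) / 30
      = ((Real.pi * a * (1-a^4) / (30 * Real.sinh (Real.pi*a)) : ℝ) : ℂ) := by
  set c : ℂ := Complex.I*a with hc
  have hc0 : c ≠ 0 := by
    simp [hc, Complex.ext_iff, ha.ne']
  have hc1 : c + 1 ≠ 0 := by
    intro h; have := congrArg Complex.re h; simp [hc] at this
  have hc1' : (1:ℂ) - c ≠ 0 := by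
    intro h; have := congrArg Complex.re h; simp [hc] at this
  have hg2 : Complex.Gamma (c+2) = (c+1) * (c * Complex.Gamma c) := by
    rw [show c+2 = (c+1)+1 by ring, Complex.Gamma_add_one _ hc1, Complex.Gamma_add_one _ hc0]
  have hg2' : Complex.Gamma (2-c) = (1-c) * Complex.Gamma (1-c) := by
    rw [show (2:ℂ)-c = (1-c)+1 by ring, Complex.Gamma_add_one _ hc1']
  have hrefl := Complex.Gamma_mul_Gamma_one_sub c
  have hsin : Complex.sin (↑Real.pi * c) = ↑(Real.sinh (Real.pi*a)) * Complex.I := by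
    rw [show ↑Real.pi * c = ((Real.pi*a : ℝ):ℂ) * Complex.I by rw [hc]; push_cast; ring,
      Complex.sin_mul_I, Complex.ofReal_sinh]
  have hsinh : Real.sinh (Real.pi*a) ≠ 0 := by
    have : 0 < Real.sinh (Real.pi*a) := Real.sinh_pos_iff.2 (by positivity)
    exact this.ne'
  have hsinhC : ((Real.sinh (Real.pi*a) : ℝ):ℂ) ≠ 0 := by exact_mod_cast hsinh
  rw [hg2, hg2']
  rw [show (c+1) * (c * Complex.Gamma c) * ((1-c) * Complex.Gamma (1-c)) * (c^2+1) / 30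
      = (c+1) * c * (1-c) * (c^2+1) / 30 * (Complex.Gamma c * Complex.Gamma (1-c)) by ring,
    hrefl, hsin]
  rw [hc]
  have key : (Complex.I*(a:ℂ)+1) * (Complex.I*(a:ℂ)) * (1-Complex.I*(a:ℂ)) * ((Complex.I*(a:ℂ))^2+1)
      = Complex.I * ((a:ℂ) - (a:ℂ)^5) := by
    linear_combination (Complex.I*(a:ℂ)^5*(1-Complex.I^2)) * Complex.I_sq
  rw [key]
  push_cast
  have hS : Complex.sinh ((Real.pi:ℂ)*(a:ℂ)) ≠ 0 := by
    rw [← Complex.ofReal_mul, ← Complex.ofReal_sinh]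
    exact_mod_cast hsinh
  field_simp [hS, Complex.I_ne_zero]

/-- For every δ > 0, ω > 0 and t₀ ∈ ℝ, `t ↦ cos(ω(t+t₀))·x_h'(t)²`
is integrable on ℝ and
`∫ cos(ω(t+t₀))·x_h'(t)² dt = (6π/5)·ω·(δ² − ω⁴)·cos(ω t₀)/(δ²·sinh(πω/√δ))`. -/
theorem helmholtz_mass_derivative_integral (δ ω : ℝ) (hδ : 0 < δ) (hω : 0 < ω) (t₀ : ℝ)
    (x : ℝ → ℝ)
    (hx : ∀ t : ℝ, x t = 1 - 3 / (1 + Real.cosh (Real.sqrt δ * t))) :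
    Integrable (fun t : ℝ => Real.cos (ω * (t + t₀)) * (deriv x t) ^ 2) ∧
    ∫ t : ℝ, Real.cos (ω * (t + t₀)) * (deriv x t) ^ 2 =
      (6 * Real.pi / 5) * ω * (δ ^ 2 - ω ^ 4) * Real.cos (ω * t₀) /
        (δ ^ 2 * Real.sinh (Real.pi * ω / Real.sqrt δ)) := by
  have hs : 0 < Real.sqrt δ := Real.sqrt_pos.2 hδ
  set s : ℝ := Real.sqrt δ with hs_def
  have hs2 : s^2 = δ := Real.sq_sqrt hδ.le
  set a : ℝ := ω / s with ha_def
  have ha : 0 < a := div_pos hω hs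
  set c : ℂ := Complex.I * ((ω:ℂ) / (s:ℂ)) with hc_def
  have hca : c = Complex.I * ((a:ℝ):ℂ) := by rw [hc_def, ha_def]; push_cast; ring
  have hcre : c.re = 0 := by simp [hc_def]
  set F : ℝ → ℂ := fun y => (y:ℂ)^(c+1) * (1-(y:ℂ))^(1-c) * (1-2*(y:ℂ))^2 with hF_def
  have hder : ∀ t ∈ (Set.univ : Set ℝ),
      HasDerivWithinAt (lgs s) (s * (lgs s t * (1 - lgs s t))) Set.univ t :=
    fun t _ => (lgs_hasDeriv s t).hasDerivWithinAt
  have hinj : Set.InjOn (lgs s) Set.univ := (lgs_strictMono hs).injective.injOn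
  have hFint : IntegrableOn F (Set.Ioo 0 1) := F_integrableOn c hcre
  have hIio : IntegrableOn F (lgs s '' Set.univ) := by rw [lgs_range hs]; exact hFint
  have hint1 : Integrable (fun t => |s * (lgs s t * (1 - lgs s t))| • F (lgs s t)) := by
    have := (integrableOn_image_iff_integrableOn_abs_deriv_smul MeasurableSet.univ hder hinj F).1 hIio
    simpa [integrableOn_univ] using this
  have hkey : ∀ t, |s * (lgs s t * (1 - lgs s t))| • F (lgs s t)
      = ((s / (36*δ) : ℝ):ℂ) * (Complex.exp (Complex.I*(ω*t)) * ((deriv x t)^2 : ℝ)) :=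
    fun t => cov_pointwise δ ω hδ hω x hx t
  have hkC : ((s / (36*δ) : ℝ):ℂ) ≠ 0 := by
    have : s / (36*δ) ≠ 0 := by positivity
    exact_mod_cast this
  have hJ : Integrable (fun t : ℝ => Complex.exp (Complex.I*(ω*t)) * ((deriv x t)^2 : ℝ)) := by
    have h2 : Integrable (fun t : ℝ =>
        ((s / (36*δ) : ℝ):ℂ) * (Complex.exp (Complex.I*(ω*t)) * ((deriv x t)^2 : ℝ))) := by
      rw [show (fun t : ℝ => ((s / (36*δ) : ℝ):ℂ) * (Complex.exp (Complex.I*(ω*t)) * ((deriv x t)^2 : ℝ)))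
        = fun t => |s * (lgs s t * (1 - lgs s t))| • F (lgs s t) from (funext hkey).symm]
      exact hint1
    have h3 := h2.const_mul (((36*δ)/s : ℝ):ℂ)
    apply h3.congr
    filter_upwards with t
    have hone : (((36*δ)/s : ℝ):ℂ) * ((s / (36*δ) : ℝ):ℂ) = 1 := by
      rw [← Complex.ofReal_mul]
      have hr : ((36*δ)/s) * (s / (36*δ)) = 1 := by
        have h36 : (36:ℝ)*δ ≠ 0 := by positivity
        field_simp
      rw [hr, Complex.ofReal_one]
    rw [← mul_assoc, hone, one_mul]
  -- value of the complex integral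
  have hval : ∫ t : ℝ, Complex.exp (Complex.I*(ω*t)) * ((deriv x t)^2 : ℝ)
      = ((36*δ/s * (Real.pi * a * (1-a^4) / (30 * Real.sinh (Real.pi*a))) : ℝ):ℂ) := by
    have hcov := integral_image_eq_integral_abs_deriv_smul MeasurableSet.univ hder hinj F
    rw [lgs_range hs] at hcov
    have hbeta : ∫ y in Set.Ioo (0:ℝ) 1, F y
        = ((Real.pi * a * (1-a^4) / (30 * Real.sinh (Real.pi*a)) : ℝ):ℂ) := by
      rw [hF_def]
      rw [beta_eval c hcre, hca]
      exact gamma_eval a ha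
    have hsmul : ∫ t in Set.univ, |s * (lgs s t * (1 - lgs s t))| • F (lgs s t)
        = ((s / (36*δ) : ℝ):ℂ) * ∫ t : ℝ, Complex.exp (Complex.I*(ω*t)) * ((deriv x t)^2 : ℝ) := by
      rw [setIntegral_univ]
      simp_rw [hkey]
      rw [integral_const_mul]
    rw [hbeta, hsmul] at hcov
    apply mul_left_cancel₀ hkC
    rw [← hcov, ← Complex.ofReal_mul, Complex.ofReal_inj]
    have h36 : (36:ℝ)*δ ≠ 0 := by positivity
    field_simp
  -- real part identification
  have hre_eq : ∀ t : ℝ, (Complex.exp (Complex.I*((ω:ℂ)*((t:ℂ)+(t₀:ℂ)))) * ((deriv x t)^2 : ℝ)).re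
      = Real.cos (ω*(t+t₀)) * (deriv x t)^2 := by
    intro t
    rw [show Complex.I*((ω:ℂ)*((t:ℂ)+(t₀:ℂ))) = ((ω*(t+t₀) : ℝ):ℂ) * Complex.I by push_cast; ring,
      Complex.exp_mul_I, ← Complex.ofReal_cos, ← Complex.ofReal_sin]
    simp only [add_mul, Complex.add_re, Complex.mul_re, Complex.ofReal_re, Complex.ofReal_im,
      Complex.I_re, Complex.I_im, mul_zero, zero_mul, sub_zero, mul_one, zero_sub, add_zero,
      neg_zero, zero_add]
    try ring
  have hK : Integrable (fun t : ℝ => Complex.exp (Complex.I*((ω:ℂ)*((t:ℂ)+(t₀:ℂ)))) * ((deriv x t)^2 : ℝ)) := by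
    have h4 := hJ.const_mul (Complex.exp (Complex.I*((ω:ℂ)*(t₀:ℂ))))
    apply h4.congr
    filter_upwards with t
    rw [← mul_assoc, ← Complex.exp_add,
      show Complex.I*((ω:ℂ)*(t₀:ℂ)) + Complex.I*((ω:ℂ)*(t:ℂ)) = Complex.I*((ω:ℂ)*((t:ℂ)+(t₀:ℂ))) by ring]
  constructor
  · refine hK.re.congr ?_
    filter_upwards with t
    rw [RCLike.re_to_complex]
    exact hre_eq t
  · have h5 : ∫ t : ℝ, Real.cos (ω*(t+t₀)) * (deriv x t)^2
        = RCLike.re (∫ t : ℝ, Complex.exp (Complex.I*((ω:ℂ)*((t:ℂ)+(t₀:ℂ)))) * ((deriv x t)^2 : ℝ)) := by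
      rw [← integral_re hK]
      congr 1
      funext t
      rw [RCLike.re_to_complex, hre_eq t]
    have h6 : ∫ t : ℝ, Complex.exp (Complex.I*((ω:ℂ)*((t:ℂ)+(t₀:ℂ)))) * ((deriv x t)^2 : ℝ)
        = Complex.exp (((ω*t₀ : ℝ):ℂ) * Complex.I)
          * ((36*δ/s * (Real.pi * a * (1-a^4) / (30 * Real.sinh (Real.pi*a))) : ℝ):ℂ) := by
      rw [← hval, ← integral_const_mul]
      congr 1
      funext t
      conv_rhs => rw [← mul_assoc, ← Complex.exp_add]
      congr 2
      try push_cast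
      try ring
    have hRe : (Complex.exp (((ω*t₀:ℝ):ℂ) * Complex.I)
          * ((36*δ/s * (Real.pi * a * (1-a^4) / (30 * Real.sinh (Real.pi*a))) : ℝ):ℂ)).re
        = Real.cos (ω*t₀) * (36*δ/s * (Real.pi * a * (1-a^4) / (30 * Real.sinh (Real.pi*a)))) := by
      rw [Complex.exp_mul_I, ← Complex.ofReal_cos, ← Complex.ofReal_sin]
      simp only [add_mul, Complex.add_re, Complex.mul_re, Complex.ofReal_re, Complex.ofReal_im,
        Complex.I_re, Complex.I_im, mul_zero, zero_mul, sub_zero, mul_one, zero_sub, add_zero,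
        neg_zero, zero_add]
      try ring
    rw [h5, RCLike.re_to_complex, h6, hRe]
    have harg : Real.pi * ω / s = Real.pi * a := by rw [ha_def]; field_simp
    rw [harg, ha_def, ← hs2]
    have hsinh' : Real.sinh (Real.pi * (ω/s)) ≠ 0 := by
      have : 0 < Real.sinh (Real.pi * (ω/s)) := Real.sinh_pos_iff.2 (by positivity)
      exact this.ne'
    field_simp
    ring
end

section
/- For every a ∈ ℝ with a ≠ 0, the function v ↦ sin(a·v)·tanh(v)·sech(v)² is integrable on ℝ and ∫_{−∞}^{∞} sin(a·v)·tanh(v)·sech(v)² dv = π·a²/(2·sinh(π·a/2)). -/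
open MeasureTheory

namespace FourierSechAux

open Set

noncomputable def phiH (x : ℝ) : ℝ := (1/2) * (Real.log x - Real.log (1 - x))

lemma phiH_hasDeriv {x : ℝ} (hx : x ∈ Ioo (0:ℝ) 1) :
    HasDerivWithinAt phiH (1/(2*x*(1-x))) (Ioo (0:ℝ) 1) x := by
  obtain ⟨h0, h1⟩ := hx
  have hx0 : x ≠ 0 := ne_of_gt h0
  have hx1 : (1:ℝ) - x ≠ 0 := by linarith
  have d1 : HasDerivAt Real.log (1/x) x := by
    simpa [one_div] using Real.hasDerivAt_log hx0
  have d2 : HasDerivAt (fun y : ℝ => Real.log (1 - y)) (-(1/(1-x))) x := by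
    have h := (Real.hasDerivAt_log hx1).comp x (by
      simpa using ((hasDerivAt_id x).const_sub 1))
    rw [one_div, ← mul_neg_one]; exact h
  have := ((d1.sub d2).const_mul (1/2 : ℝ))
  have heq : (1/2 : ℝ) * (1/x - -(1/(1-x))) = 1/(2*x*(1-x)) := by
    field_simp; ring
  rw [heq] at this
  exact (this.hasDerivWithinAt)

lemma phiH_exp {x : ℝ} (hx : x ∈ Ioo (0:ℝ) 1) :
    Real.exp (2 * phiH x) = x / (1 - x) := by
  obtain ⟨h0, h1⟩ := hx
  have : 2 * phiH x = Real.log x - Real.log (1-x) := by unfold phiH; ring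
  rw [this, Real.exp_sub, Real.exp_log h0, Real.exp_log (by linarith)]

lemma phiH_injOn : InjOn phiH (Ioo (0:ℝ) 1) := by
  intro x hx y hy h
  have hex : Real.exp (2 * phiH x) = Real.exp (2 * phiH y) := by rw [h]
  rw [phiH_exp hx, phiH_exp hy] at hex
  obtain ⟨hx0, hx1⟩ := hx; obtain ⟨hy0, hy1⟩ := hy
  have h1x : (1:ℝ) - x ≠ 0 := by linarith
  have h1y : (1:ℝ) - y ≠ 0 := by linarith
  field_simp at hex
  nlinarith

lemma phiH_image : phiH '' (Ioo (0:ℝ) 1) = univ := by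
  apply eq_univ_of_forall
  intro v
  set x := Real.exp (2*v) / (1 + Real.exp (2*v)) with hxdef
  have hE : (0:ℝ) < Real.exp (2*v) := Real.exp_pos _
  have hden : (0:ℝ) < 1 + Real.exp (2*v) := by linarith
  have hx0 : 0 < x := div_pos hE hden
  have hx1 : x < 1 := by rw [div_lt_one hden]; linarith
  refine ⟨x, ⟨hx0, hx1⟩, ?_⟩
  have h1x : 1 - x = 1 / (1 + Real.exp (2*v)) := by
    rw [hxdef]; field_simp; ring
  unfold phiH
  rw [h1x, Real.log_div (ne_of_gt hE) (ne_of_gt hden), Real.log_div one_ne_zero (ne_of_gt hden),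
    Real.log_one, Real.log_exp]
  ring

lemma tanh_phiH {x : ℝ} (hx : x ∈ Ioo (0:ℝ) 1) : Real.tanh (phiH x) = 2*x - 1 := by
  obtain ⟨h0, h1⟩ := hx
  set t := phiH x
  have hp : Real.exp t > 0 := Real.exp_pos _
  have hp2 : Real.exp t ^ 2 = x / (1-x) := by
    rw [← Real.exp_nat_mul]
    push_cast
    rw [show (2:ℝ) * t = 2 * phiH x from rfl]
    exact phiH_exp ⟨h0, h1⟩
  have h1x : (0:ℝ) < 1 - x := by linarith
  rw [Real.tanh_eq_sinh_div_cosh, Real.sinh_eq, Real.cosh_eq, Real.exp_neg]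
  have e1 : Real.exp t ^ 2 * (1 - x) = x := by
    rw [hp2]; field_simp
  have hpos : Real.exp t + (Real.exp t)⁻¹ > 0 := by positivity
  rw [div_div_div_cancel_right₀ (two_ne_zero), div_eq_iff (ne_of_gt hpos)]
  field_simp
  nlinarith [e1]

lemma sech_sq_phiH {x : ℝ} (hx : x ∈ Ioo (0:ℝ) 1) :
    (1 / Real.cosh (phiH x))^2 = 4*x*(1-x) := by
  obtain ⟨h0, h1⟩ := hx
  set t := phiH x
  have hp : Real.exp t > 0 := Real.exp_pos _
  have hp2 : Real.exp t ^ 2 = x / (1-x) := by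
    rw [← Real.exp_nat_mul]
    push_cast
    exact phiH_exp ⟨h0, h1⟩
  have h1x : (0:ℝ) < 1 - x := by linarith
  have e1 : Real.exp t ^ 2 * (1 - x) = x := by rw [hp2]; field_simp
  rw [Real.cosh_eq, Real.exp_neg]
  have hch : Real.exp t + (Real.exp t)⁻¹ > 0 := by positivity
  rw [div_pow, one_pow, div_pow, div_div_eq_mul_div, one_mul,
    div_eq_iff (by positivity)]
  field_simp
  nlinarith [e1, sq_nonneg (Real.exp t)]

lemma beta_combo (a : ℝ) (ha : a ≠ 0) :
    2 * Complex.betaIntegral (2 + (a/2)*Complex.I) (1 - (a/2)*Complex.I)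
      - Complex.betaIntegral (1 + (a/2)*Complex.I) (1 - (a/2)*Complex.I)
    = (Real.pi * a^2 / (4 * Real.sinh (Real.pi * a / 2))) * Complex.I := by
  set z : ℂ := (a/2)*Complex.I with hz
  have hzre : z.re = 0 := by simp [hz]
  have hzim : z.im = a/2 := by simp [hz]
  have hz0 : z ≠ 0 := by
    intro h; apply ha; have := congrArg Complex.im h; simpa [hzim] using this
  have e2 : (1:ℂ) + z + (1 - z) = 2 := by ring
  have e3 : (2:ℂ) + z + (1 - z) = 3 := by ring
  have h1 : Complex.Gamma (1+z) * Complex.Gamma (1-z)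
      = Complex.Gamma 2 * Complex.betaIntegral (1+z) (1-z) := by
    have := Complex.Gamma_mul_Gamma_eq_betaIntegral (s := 1+z) (t := 1-z)
      (by simp [hzre]) (by simp [hzre])
    rwa [e2] at this
  have h2 : Complex.Gamma (2+z) * Complex.Gamma (1-z)
      = Complex.Gamma 3 * Complex.betaIntegral (2+z) (1-z) := by
    have := Complex.Gamma_mul_Gamma_eq_betaIntegral (s := 2+z) (t := 1-z)
      (by simp [hzre]) (by simp [hzre])
    rwa [e3] at this
  have hG2 : Complex.Gamma 2 = 1 := by
    simpa using Complex.Gamma_nat_eq_factorial 1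
  have hG3 : Complex.Gamma 3 = 2 := by
    have := Complex.Gamma_nat_eq_factorial 2
    norm_num at this
    convert this using 2 <;> norm_num
  have hB1 : Complex.betaIntegral (1+z) (1-z) = Complex.Gamma (1+z) * Complex.Gamma (1-z) := by
    rw [h1, hG2, one_mul]
  have hB2 : (2:ℂ) * Complex.betaIntegral (2+z) (1-z)
      = Complex.Gamma (2+z) * Complex.Gamma (1-z) := by
    rw [h2, hG3]
  have hGadd1 : Complex.Gamma (1+z) = z * Complex.Gamma z := by
    have := Complex.Gamma_add_one z hz0
    rwa [add_comm] at this
  have hGadd2 : Complex.Gamma (2+z) = (1+z) * Complex.Gamma (1+z) := by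
    have := Complex.Gamma_add_one (1+z) (by
      intro h; have := congrArg Complex.re h; simp [hzre] at this)
    rw [show (1:ℂ)+z+1 = 2+z by ring] at this
    exact this
  have hrefl : Complex.Gamma z * Complex.Gamma (1-z) = ↑Real.pi / Complex.sin (↑Real.pi * z) :=
    Complex.Gamma_mul_Gamma_one_sub z
  have hsin : Complex.sin (↑Real.pi * z) = (Real.sinh (Real.pi * a / 2) : ℂ) * Complex.I := by
    have : (↑Real.pi : ℂ) * z = (↑(Real.pi * a / 2) : ℂ) * Complex.I := by
      rw [hz]; push_cast; ring
    rw [this, Complex.sin_mul_I, Complex.ofReal_sinh]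
  have hs0 : Real.sinh (Real.pi * a / 2) ≠ 0 := by
    rw [Real.sinh_ne_zero]
    intro h
    have h2' : Real.pi * a = 0 := by linarith [h]
    rcases mul_eq_zero.mp h2' with h'' | h''
    · exact absurd h'' Real.pi_ne_zero
    · exact ha h''
  calc 2 * Complex.betaIntegral (2+z) (1-z) - Complex.betaIntegral (1+z) (1-z)
      = Complex.Gamma (2+z) * Complex.Gamma (1-z)
        - Complex.Gamma (1+z) * Complex.Gamma (1-z) := by rw [hB1, hB2]
    _ = z * z * (Complex.Gamma z * Complex.Gamma (1-z)) := by
        rw [hGadd2, hGadd1]; ring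
    _ = z * z * (↑Real.pi / ((Real.sinh (Real.pi * a / 2) : ℂ) * Complex.I)) := by
        rw [hrefl, hsin]
    _ = (Real.pi * a^2 / (4 * Real.sinh (Real.pi * a / 2))) * Complex.I := by
        have hs : (Real.sinh (Real.pi * a / 2) : ℂ) ≠ 0 := by exact_mod_cast hs0
        have hzz : z * z = -((a:ℂ)^2/4) := by
          rw [hz]; ring_nf; rw [Complex.I_sq]; ring
        rw [hzz]
        push_cast
        have hS : Complex.sinh ((Real.pi:ℂ) * a / 2) ≠ 0 := by
          have hc : ((Real.pi * a / 2 : ℝ):ℂ) = (Real.pi:ℂ)*a/2 := by push_cast; ring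
          rw [← hc, ← Complex.ofReal_sinh]; exact_mod_cast hs0
        field_simp
        ring_nf
        rw [Complex.I_sq]
        ring

end FourierSechAux

open FourierSechAux Set

/-- For every a ≠ 0, the function `v ↦ sin(a·v)·tanh(v)·sech(v)²`
is integrable on ℝ and `∫ sin(a·v)·tanh(v)·sech(v)² dv = π·a²/(2·sinh(π·a/2))`. -/
theorem fourier_integral_sin_tanh_sech_sq (a : ℝ) (ha : a ≠ 0) :
    Integrable (fun v : ℝ => Real.sin (a * v) * Real.tanh v * (1 / Real.cosh v) ^ 2) ∧
    ∫ v : ℝ, Real.sin (a * v) * Real.tanh v * (1 / Real.cosh v) ^ 2 =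
      Real.pi * a ^ 2 / (2 * Real.sinh (Real.pi * a / 2)) := by
  set z : ℂ := (a/2)*Complex.I with hz
  set f : ℝ → ℝ := fun v : ℝ => Real.sin (a * v) * Real.tanh v * (1 / Real.cosh v) ^ 2 with hf
  set g : ℝ → ℂ := fun x : ℝ =>
    (2*(x:ℂ) - 1) * Complex.exp (((Real.log x - Real.log (1-x) : ℝ) : ℂ) * z) with hg
  -- pointwise identity between beta integrands and g on (0,1)
  have hA : ∀ x ∈ Ioo (0:ℝ) 1,
      2 * ((x:ℂ)^((2+z)-1) * ((1:ℂ)-(x:ℂ))^((1-z)-1))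
        - ((x:ℂ)^((1+z)-1) * ((1:ℂ)-(x:ℂ))^((1-z)-1)) = g x := by
    intro x hx
    obtain ⟨h0, h1⟩ := hx
    have hx0c : (x:ℂ) ≠ 0 := by exact_mod_cast ne_of_gt h0
    have h1xR : (0:ℝ) < 1 - x := by linarith
    have h1xc : (1:ℂ) - (x:ℂ) ≠ 0 := by
      rw [show (1:ℂ) - (x:ℂ) = ((1-x:ℝ):ℂ) by push_cast; ring]
      exact_mod_cast ne_of_gt h1xR
    have e1 : ((2:ℂ)+z)-1 = 1+z := by ring
    have e2 : ((1:ℂ)+z)-1 = z := by ring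
    have e3 : ((1:ℂ)-z)-1 = -z := by ring
    rw [e1, e2, e3]
    rw [Complex.cpow_add _ _ hx0c, Complex.cpow_one]
    rw [Complex.cpow_def_of_ne_zero hx0c, Complex.cpow_def_of_ne_zero h1xc]
    rw [show (1:ℂ) - (x:ℂ) = ((1-x:ℝ):ℂ) by push_cast; ring]
    rw [← Complex.ofReal_log (le_of_lt h0), ← Complex.ofReal_log (le_of_lt h1xR)]
    have hprod : Complex.exp ((Real.log x:ℂ) * z) * Complex.exp ((Real.log (1-x):ℂ) * (-z))
        = Complex.exp (((Real.log x - Real.log (1-x) : ℝ) : ℂ) * z) := by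
      rw [← Complex.exp_add]; congr 1; push_cast; ring
    rw [hg]
    linear_combination (2*(x:ℂ) - 1) * hprod
  -- imaginary part of g
  have hB : ∀ x ∈ Ioo (0:ℝ) 1,
      (g x).im = (2*x - 1) * Real.sin ((Real.log x - Real.log (1-x)) * (a/2)) := by
    intro x _
    show ((2*(x:ℂ) - 1) * Complex.exp (((Real.log x - Real.log (1-x) : ℝ) : ℂ) * z)).im
      = (2*x - 1) * Real.sin ((Real.log x - Real.log (1-x)) * (a/2))
    have harg : ((Real.log x - Real.log (1-x) : ℝ) : ℂ) * z
        = ((Real.log x - Real.log (1-x)) * (a/2) : ℝ) * Complex.I := by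
      rw [hz]; push_cast; ring
    rw [harg]
    have h2x : (2*(x:ℂ) - 1) = ((2*x - 1 : ℝ) : ℂ) := by push_cast; ring
    rw [h2x, Complex.im_ofReal_mul]
    simp [Complex.exp_im]
  -- integrability of beta integrands on Ioo 0 1
  have hzre : z.re = 0 := by simp [hz]
  have hconv2 : IntegrableOn (fun x : ℝ => (x:ℂ)^((2+z)-1) * ((1:ℂ)-(x:ℂ))^((1-z)-1))
      (Ioo (0:ℝ) 1) := by
    have h := Complex.betaIntegral_convergent (u := 2+z) (v := 1-z)
      (by simp [hzre]) (by simp [hzre])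
    rw [intervalIntegrable_iff_integrableOn_Ioc_of_le zero_le_one] at h
    exact h.mono_set Ioo_subset_Ioc_self
  have hconv1 : IntegrableOn (fun x : ℝ => (x:ℂ)^((1+z)-1) * ((1:ℂ)-(x:ℂ))^((1-z)-1))
      (Ioo (0:ℝ) 1) := by
    have h := Complex.betaIntegral_convergent (u := 1+z) (v := 1-z)
      (by simp [hzre]) (by simp [hzre])
    rw [intervalIntegrable_iff_integrableOn_Ioc_of_le zero_le_one] at h
    exact h.mono_set Ioo_subset_Ioc_self
  have hgint : IntegrableOn g (Ioo (0:ℝ) 1) := by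
    refine ((hconv2.const_mul 2).sub hconv1).congr ?_
    exact (ae_restrict_mem measurableSet_Ioo).mono (fun x hx => hA x hx)
  -- the substituted real integrand equals 2 * im (g x) on Ioo 0 1
  have hD : ∀ x ∈ Ioo (0:ℝ) 1,
      |1/(2*x*(1-x))| • f (phiH x) = 2 * (g x).im := by
    intro x hx
    obtain ⟨h0, h1⟩ := hx
    have h1x : (0:ℝ) < 1 - x := by linarith
    have habs : |1/(2*x*(1-x))| = 1/(2*x*(1-x)) := abs_of_pos (by positivity)
    rw [habs, hB x ⟨h0, h1⟩, hf]
    simp only [smul_eq_mul]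
    rw [tanh_phiH ⟨h0, h1⟩, sech_sq_phiH ⟨h0, h1⟩]
    have hsin : Real.sin (a * phiH x) = Real.sin ((Real.log x - Real.log (1-x)) * (a/2)) := by
      congr 1
      unfold phiH
      ring
    rw [hsin]
    field_simp
    ring
  -- integrability of f
  have hiff := integrableOn_image_iff_integrableOn_abs_deriv_smul
    (measurableSet_Ioo) (fun x hx => phiH_hasDeriv hx) phiH_injOn f
  rw [phiH_image] at hiff
  have hsubint : IntegrableOn (fun x => |1/(2*x*(1-x))| • f (phiH x)) (Ioo (0:ℝ) 1) := by
    refine ((hgint.im.const_mul 2).congr ?_)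
    exact (ae_restrict_mem measurableSet_Ioo).mono (fun x hx => (hD x hx).symm)
  have hfint : Integrable f := by
    rw [← integrableOn_univ]
    exact hiff.mpr hsubint
  refine ⟨hfint, ?_⟩
  -- value computation
  have hval : ∫ v : ℝ, f v = ∫ x in Ioo (0:ℝ) 1, |1/(2*x*(1-x))| • f (phiH x) := by
    rw [← setIntegral_univ, ← phiH_image]
    exact integral_image_eq_integral_abs_deriv_smul measurableSet_Ioo
      (fun x hx => phiH_hasDeriv hx) phiH_injOn f
  have hval2 : ∫ x in Ioo (0:ℝ) 1, |1/(2*x*(1-x))| • f (phiH x)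
      = ∫ x in Ioo (0:ℝ) 1, 2 * (g x).im :=
    setIntegral_congr_fun measurableSet_Ioo (fun x hx => hD x hx)
  have hval3 : ∫ x in Ioo (0:ℝ) 1, 2 * (g x).im = 2 * (∫ x in Ioo (0:ℝ) 1, g x).im := by
    rw [integral_const_mul]
    congr 1
    exact integral_im hgint
  have hIoog : ∫ x in Ioo (0:ℝ) 1, g x
      = 2 * Complex.betaIntegral (2+z) (1-z) - Complex.betaIntegral (1+z) (1-z) := by
    have hgeq : ∫ x in Ioo (0:ℝ) 1, g x
        = ∫ x in Ioo (0:ℝ) 1,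
            (2 * ((x:ℂ)^((2+z)-1) * ((1:ℂ)-(x:ℂ))^((1-z)-1))
              - ((x:ℂ)^((1+z)-1) * ((1:ℂ)-(x:ℂ))^((1-z)-1))) :=
      setIntegral_congr_fun measurableSet_Ioo (fun x hx => (hA x hx).symm)
    rw [hgeq, integral_sub (hconv2.const_mul 2) hconv1, integral_const_mul]
    unfold Complex.betaIntegral
    rw [intervalIntegral.integral_of_le zero_le_one, intervalIntegral.integral_of_le zero_le_one,
      integral_Ioc_eq_integral_Ioo, integral_Ioc_eq_integral_Ioo]
  have hs0 : Real.sinh (Real.pi * a / 2) ≠ 0 := by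
    rw [Real.sinh_ne_zero]
    intro h
    have h2' : Real.pi * a = 0 := by linarith [h]
    rcases mul_eq_zero.mp h2' with h'' | h''
    · exact absurd h'' Real.pi_ne_zero
    · exact ha h''
  rw [show (∫ v : ℝ, Real.sin (a * v) * Real.tanh v * (1 / Real.cosh v) ^ 2) = ∫ v : ℝ, f v
      from rfl]
  rw [hval, hval2, hval3, hIoog, beta_combo a ha]
  have hcast : (Real.pi : ℂ) * (a:ℂ)^2 / (4 * (Real.sinh (Real.pi * a / 2) : ℂ))
      = ((Real.pi * a^2 / (4 * Real.sinh (Real.pi * a / 2)) : ℝ) : ℂ) := by push_cast; ring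
  rw [hcast, Complex.im_ofReal_mul]
  simp only [Complex.I_im, mul_one]
  field_simp
  ring
end

section
/- For every a ∈ ℝ, the function v ↦ cos(a·v)·tanh(v)²·sech(v)⁴ is integrable on ℝ and ∫_{−∞}^{∞} cos(a·v)·tanh(v)²·sech(v)⁴ dv = π·a·(a² + 4)·(4 − a²)/(120·sinh(π·a/2)), where for a = 0 the right-hand side is interpreted as its limit 4/15. -/
open MeasureTheory

open Set

noncomputable section


lemma hx_integrable_exp_neg_abs : Integrable (fun v : ℝ => Real.exp (-|v|)) := by
  have h1 : IntegrableOn (fun v : ℝ => Real.exp (-|v|)) (Ioi 0) := by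
    refine (exp_neg_integrableOn_Ioi 0 one_pos).congr_fun (fun x hx => ?_) measurableSet_Ioi
    simp [abs_of_pos (mem_Ioi.mp hx)]
  have h2 : IntegrableOn (fun v : ℝ => Real.exp (-|v|)) (Iic 0) := by
    refine (integrableOn_exp_Iic 0).congr_fun (fun x hx => ?_) measurableSet_Iic
    simp [abs_of_nonpos (mem_Iic.mp hx)]
  have h3 := h2.union h1
  rwa [Iic_union_Ioi, integrableOn_univ] at h3

lemma hx_integrable_aux {g : ℝ → ℝ} (hg : Continuous g) (hb : ∀ v, |g v| ≤ 1) :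
    Integrable (fun v : ℝ => g v * Real.tanh v ^ 2 * (1 / Real.cosh v) ^ 4) := by
  refine Integrable.mono' (hx_integrable_exp_neg_abs.const_mul 2) ?_
    (Filter.Eventually.of_forall fun v => ?_)
  · have htanh : Continuous Real.tanh := by
      rw [show Real.tanh = fun x => Real.sinh x / Real.cosh x from funext Real.tanh_eq_sinh_div_cosh]
      exact Real.continuous_sinh.div Real.continuous_cosh fun x => (Real.cosh_pos x).ne'
    exact ((hg.mul (htanh.pow 2)).mul
      ((continuous_const.div Real.continuous_cosh fun x => (Real.cosh_pos x).ne').pow 4)).aestronglyMeasurable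
  · have hc := Real.cosh_pos v
    have h1 : Real.tanh v ^ 2 ≤ 1 := by
      rw [Real.tanh_eq_sinh_div_cosh, div_pow, div_le_one (by positivity)]
      nlinarith [Real.cosh_sq v]
    have h2 : (1 / Real.cosh v) ^ 4 ≤ 2 * Real.exp (-|v|) := by
      have hcl : Real.exp |v| ≤ 2 * Real.cosh v := by
        rw [Real.cosh_eq]
        rcases abs_cases v with ⟨h, _⟩ | ⟨h, _⟩ <;> rw [h] <;>
          nlinarith [Real.exp_pos v, Real.exp_pos (-v)]
      have hs0 : (0:ℝ) < 1 / Real.cosh v := by positivity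
      have h14 : (1 / Real.cosh v) ^ 4 ≤ 1 / Real.cosh v := by
        have hle : 1 / Real.cosh v ≤ 1 := by
          rw [div_le_one hc]; exact Real.one_le_cosh v
        exact pow_le_of_le_one hs0.le hle (by norm_num)
      refine h14.trans ?_
      rw [div_le_iff₀ hc]
      have he := Real.exp_pos (-|v|)
      calc (1:ℝ) = Real.exp (-|v|) * Real.exp |v| := by rw [← Real.exp_add]; simp
        _ ≤ Real.exp (-|v|) * (2 * Real.cosh v) := by nlinarith
        _ = 2 * Real.exp (-|v|) * Real.cosh v := by ring
    have e1 : |Real.tanh v| ^ 2 = Real.tanh v ^ 2 := sq_abs _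
    have e2 : |1 / Real.cosh v| = 1 / Real.cosh v := abs_of_pos (by positivity)
    rw [Real.norm_eq_abs, abs_mul, abs_mul, abs_pow, abs_pow, e1, e2]
    calc |g v| * Real.tanh v ^ 2 * (1 / Real.cosh v) ^ 4
        ≤ 1 * 1 * (2 * Real.exp (-|v|)) := by
          refine mul_le_mul ?_ h2 (by positivity) (by norm_num)
          exact mul_le_mul (hb v) h1 (sq_nonneg _) (by norm_num)
      _ = 2 * Real.exp (-|v|) := by ring

lemma hx_beta_eval {b : ℂ} (hb : b.re = 0) :
    (∫ x in (0:ℝ)..1, (x:ℂ) ^ (1+b) * (1 - (x:ℂ)) ^ (1-b) * (2*(x:ℂ) - 1)^2)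
      = Complex.Gamma (1+b) * Complex.Gamma (1-b) * ((1-b^2)*(1+b^2)) / 30 := by
  have h1p : (1:ℂ) + b ≠ 0 := by
    intro h; have := congrArg Complex.re h; simp [hb] at this
  have h2p : (2:ℂ) + b ≠ 0 := by
    intro h; have := congrArg Complex.re h; simp [hb] at this
  have h3p : (3:ℂ) + b ≠ 0 := by
    intro h; have := congrArg Complex.re h; simp [hb] at this
  have h1m : (1:ℂ) - b ≠ 0 := by
    intro h; have := congrArg Complex.re h; simp [hb] at this
  have e4 : (4:ℂ)+b-1 = 3+b := by ring
  have e3 : (3:ℂ)+b-1 = 2+b := by ring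
  have e2 : (2:ℂ)+b-1 = 1+b := by ring
  have em : (2:ℂ)-b-1 = 1-b := by ring
  have hcong : Set.EqOn (fun x : ℝ => (x:ℂ) ^ (1+b) * (1 - (x:ℂ)) ^ (1-b) * (2*(x:ℂ) - 1)^2)
      (fun x : ℝ => 4 * ((x:ℂ)^((4+b)-1) * (1-(x:ℂ))^((2-b)-1))
        - 4*((x:ℂ)^((3+b)-1)*(1-(x:ℂ))^((2-b)-1))
        + (x:ℂ)^((2+b)-1)*(1-(x:ℂ))^((2-b)-1)) (Set.uIcc 0 1) := by
    intro x _
    simp only [e4, e3, e2, em]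
    by_cases hx0 : (x:ℂ) = 0
    · rw [hx0]
      rw [Complex.zero_cpow h1p, Complex.zero_cpow h2p, Complex.zero_cpow h3p]
      ring
    · have p3 : (x:ℂ)^((3:ℂ)+b) = (x:ℂ)^((1:ℂ)+b) * (x:ℂ)^2 := by
        rw [show (3:ℂ)+b = (1+b)+2 by ring, Complex.cpow_add _ _ hx0,
          show ((2:ℂ)) = ((2:ℕ):ℂ) by norm_num, Complex.cpow_natCast]
      have p2 : (x:ℂ)^((2:ℂ)+b) = (x:ℂ)^((1:ℂ)+b) * (x:ℂ) := by
        rw [show (2:ℂ)+b = (1+b)+1 by ring, Complex.cpow_add _ _ hx0, Complex.cpow_one]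
      rw [p3, p2]
      ring
  rw [intervalIntegral.integral_congr hcong]
  have hre4 : 0 < ((4:ℂ)+b).re := by simp [hb]
  have hre3 : 0 < ((3:ℂ)+b).re := by simp [hb]
  have hre2 : 0 < ((2:ℂ)+b).re := by simp [hb]
  have hrem : 0 < ((2:ℂ)-b).re := by simp [hb]
  have c1 := Complex.betaIntegral_convergent hre4 hrem
  have c2 := Complex.betaIntegral_convergent hre3 hrem
  have c3 := Complex.betaIntegral_convergent hre2 hrem
  rw [intervalIntegral.integral_add ((c1.const_mul 4).sub (c2.const_mul 4)) c3,
    intervalIntegral.integral_sub (c1.const_mul 4) (c2.const_mul 4),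
    intervalIntegral.integral_const_mul, intervalIntegral.integral_const_mul]
  have B1 : (∫ x in (0:ℝ)..1, (x:ℂ)^((4+b)-1)*(1-(x:ℂ))^((2-b)-1))
      = Complex.betaIntegral (4+b) (2-b) := rfl
  have B2 : (∫ x in (0:ℝ)..1, (x:ℂ)^((3+b)-1)*(1-(x:ℂ))^((2-b)-1))
      = Complex.betaIntegral (3+b) (2-b) := rfl
  have B3 : (∫ x in (0:ℝ)..1, (x:ℂ)^((2+b)-1)*(1-(x:ℂ))^((2-b)-1))
      = Complex.betaIntegral (2+b) (2-b) := rfl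
  rw [B1, B2, B3]
  have g6 : Complex.Gamma 6 = 120 := by
    rw [show (6:ℂ) = ((5:ℕ):ℂ)+1 by norm_num, Complex.Gamma_nat_eq_factorial]
    norm_num [Nat.factorial]
  have g5 : Complex.Gamma 5 = 24 := by
    rw [show (5:ℂ) = ((4:ℕ):ℂ)+1 by norm_num, Complex.Gamma_nat_eq_factorial]
    norm_num [Nat.factorial]
  have g4 : Complex.Gamma 4 = 6 := by
    rw [show (4:ℂ) = ((3:ℕ):ℂ)+1 by norm_num, Complex.Gamma_nat_eq_factorial]
    norm_num [Nat.factorial]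
  have hB1 : Complex.betaIntegral (4+b) (2-b)
      = Complex.Gamma (4+b) * Complex.Gamma (2-b) / 120 := by
    have h := Complex.Gamma_mul_Gamma_eq_betaIntegral hre4 hrem
    rw [show (4:ℂ)+b+(2-b) = 6 by ring, g6] at h
    field_simp
    linear_combination -h
  have hB2 : Complex.betaIntegral (3+b) (2-b)
      = Complex.Gamma (3+b) * Complex.Gamma (2-b) / 24 := by
    have h := Complex.Gamma_mul_Gamma_eq_betaIntegral hre3 hrem
    rw [show (3:ℂ)+b+(2-b) = 5 by ring, g5] at h
    field_simp
    linear_combination -h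
  have hB3 : Complex.betaIntegral (2+b) (2-b)
      = Complex.Gamma (2+b) * Complex.Gamma (2-b) / 6 := by
    have h := Complex.Gamma_mul_Gamma_eq_betaIntegral hre2 hrem
    rw [show (2:ℂ)+b+(2-b) = 4 by ring, g4] at h
    field_simp
    linear_combination -h
  have r1 : Complex.Gamma (2+b) = (1+b) * Complex.Gamma (1+b) := by
    rw [show (2:ℂ)+b = (1+b)+1 by ring, Complex.Gamma_add_one _ h1p]
  have r2 : Complex.Gamma (3+b) = (2+b) * ((1+b) * Complex.Gamma (1+b)) := by
    rw [show (3:ℂ)+b = (2+b)+1 by ring, Complex.Gamma_add_one _ h2p, r1]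
  have r3 : Complex.Gamma (4+b) = (3+b) * ((2+b) * ((1+b) * Complex.Gamma (1+b))) := by
    rw [show (4:ℂ)+b = (3+b)+1 by ring, Complex.Gamma_add_one _ h3p, r2]
  have r4 : Complex.Gamma (2-b) = (1-b) * Complex.Gamma (1-b) := by
    rw [show (2:ℂ)-b = (1-b)+1 by ring, Complex.Gamma_add_one _ h1m]
  rw [hB1, hB2, hB3, r3, r2, r1, r4]
  ring

lemma hx_cov (a : ℝ) :
    (∫ x in Set.Ioo (0:ℝ) 1, (x:ℂ) ^ (1+((a:ℂ)*Complex.I/2)) * (1 - (x:ℂ)) ^ (1-((a:ℂ)*Complex.I/2)) * (2*(x:ℂ) - 1)^2)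
    = (8:ℂ)⁻¹ * ∫ v : ℝ, Complex.exp ((a*v : ℝ) * Complex.I)
        * ((Real.tanh v ^ 2 * (1/Real.cosh v)^4 : ℝ) : ℂ) := by
  set b : ℂ := (a:ℂ)*Complex.I/2 with hbdef
  set φ : ℝ → ℝ := fun v => (1 + Real.exp (-2*v))⁻¹ with hφdef
  set φ' : ℝ → ℝ := fun v => 2*Real.exp (-2*v) / (1+Real.exp (-2*v))^2 with hφ'def
  set G : ℝ → ℂ := fun x => (x:ℂ) ^ (1+b) * (1 - (x:ℂ)) ^ (1-b) * (2*(x:ℂ) - 1)^2 with hGdef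
  have hderiv : ∀ v : ℝ, HasDerivAt φ (φ' v) v := by
    intro v
    have h0 : HasDerivAt (fun v : ℝ => -2*v) (-2) v := by
      simpa using (hasDerivAt_id v).const_mul (-2)
    have h1 : HasDerivAt (fun v : ℝ => Real.exp (-2*v)) (Real.exp (-2*v) * (-2)) v :=
      (Real.hasDerivAt_exp (-2*v)).comp v h0
    have h2 : HasDerivAt (fun v : ℝ => 1 + Real.exp (-2*v)) (Real.exp (-2*v) * (-2)) v :=
      h1.const_add 1
    have h3 : HasDerivAt φ _ v := h2.inv (by positivity)
    convert h3 using 1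
    show 2*Real.exp (-2*v) / (1+Real.exp (-2*v))^2 = _
    ring
  have hinj : Set.InjOn φ Set.univ := by
    intro v _ w _ h
    simp only [hφdef] at h
    have h2 := inv_injective h
    have h3 : Real.exp (-2*v) = Real.exp (-2*w) := by linarith
    have h4 := Real.exp_injective h3
    linarith
  have himg : φ '' Set.univ = Set.Ioo (0:ℝ) 1 := by
    ext x
    simp only [Set.image_univ, Set.mem_range, Set.mem_Ioo]
    constructor
    · rintro ⟨v, rfl⟩
      have hE := Real.exp_pos (-2*v)
      constructor
      · simp only [hφdef]; positivity
      · simp only [hφdef]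
        have h1 : (1:ℝ) < 1 + Real.exp (-2*v) := by linarith
        rw [inv_lt_one_iff₀]
        right; exact h1
    · rintro ⟨h0, h1⟩
      refine ⟨Real.log (x/(1-x))/2, ?_⟩
      have hx1 : 0 < 1 - x := by linarith
      have he : Real.exp (-2*(Real.log (x/(1-x))/2)) = (1-x)/x := by
        rw [show -2*(Real.log (x/(1-x))/2) = -Real.log (x/(1-x)) by ring,
          Real.exp_neg, Real.exp_log (by positivity), inv_div]
      simp only [hφdef]
      rw [he]
      field_simp
      ring
  have hpt : ∀ v : ℝ, |φ' v| • (G (φ v)) = (8:ℂ)⁻¹ * (Complex.exp ((a*v : ℝ) * Complex.I)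
      * ((Real.tanh v ^ 2 * (1/Real.cosh v)^4 : ℝ) : ℂ)) := by
    intro v
    have hE : 0 < Real.exp (-2*v) := Real.exp_pos _
    set E : ℝ := Real.exp (-2*v) with hEdef
    set x : ℝ := (1+E)⁻¹ with hxdef
    have hxpos : 0 < x := by positivity
    have hxlt : x < 1 := by
      rw [hxdef, inv_lt_one_iff₀]; right; linarith
    have h1x : 1 - x = E * x := by
      rw [hxdef]; field_simp; ring
    -- real identities
    have hEv : E = Real.exp (-v) * Real.exp (-v) := by
      rw [hEdef, ← Real.exp_add]; ring_nf
    have huv : Real.exp v * Real.exp (-v) = 1 := by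
      rw [← Real.exp_add]; simp
    have hcosh : 0 < Real.exp v + Real.exp (-v) := by positivity
    have hkey : 1 + E = Real.exp (-v) * (Real.exp v + Real.exp (-v)) := by
      linear_combination hEv - huv
    have hkey2 : 1 - E = Real.exp (-v) * (Real.exp v - Real.exp (-v)) := by
      linear_combination -hEv - huv
    have htanh : Real.tanh v = 2*x - 1 := by
      have hne : (0:ℝ) < 1 + E := by positivity
      have hx2 : 2*x - 1 = (1-E)/(1+E) := by
        rw [hxdef]; field_simp; ring
      rw [hx2, hkey2, hkey, Real.tanh_eq_sinh_div_cosh, Real.sinh_eq, Real.cosh_eq]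
      rw [mul_div_mul_left _ _ (Real.exp_pos (-v)).ne']
      rw [div_div_div_comm]
      norm_num
    have hsech : (1/Real.cosh v)^2 = 4*x*(1-x) := by
      have hne : (1:ℝ) + E ≠ 0 := by positivity
      have h4 : 4*x*(1-x) = 4*E/(1+E)^2 := by
        rw [h1x, hxdef]; field_simp
      rw [h4, Real.cosh_eq, hkey, hEv]
      have h2 : Real.exp (-v) ≠ 0 := (Real.exp_pos _).ne'
      field_simp
      ring
    -- log identity
    have hlog : Real.log x - Real.log (1-x) = 2*v := by
      rw [h1x, Real.log_mul hE.ne' hxpos.ne', hEdef, Real.log_exp]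
      ring
    -- cpow identity
    have hx0c : (x:ℂ) ≠ 0 := Complex.ofReal_ne_zero.mpr hxpos.ne'
    have h1xc : (1:ℂ) - (x:ℂ) = ((1-x : ℝ) : ℂ) := by push_cast; ring
    have hx1c : (1:ℂ) - (x:ℂ) ≠ 0 := by
      rw [h1xc]; exact Complex.ofReal_ne_zero.mpr (by linarith)
    have hcpow : (x:ℂ)^(1+b) * ((1:ℂ)-(x:ℂ))^(1-b)
        = (x:ℂ) * ((1-x : ℝ):ℂ) * Complex.exp ((a*v : ℝ) * Complex.I) := by
      rw [show (1:ℂ)+b = 1+b from rfl]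
      rw [Complex.cpow_add _ _ hx0c, show (1:ℂ)-b = 1+(-b) by ring,
        Complex.cpow_add _ _ hx1c, Complex.cpow_one, Complex.cpow_one]
      rw [Complex.cpow_def_of_ne_zero hx0c, Complex.cpow_def_of_ne_zero hx1c]
      rw [h1xc, ← Complex.ofReal_log hxpos.le, ← Complex.ofReal_log (by linarith : (0:ℝ) ≤ 1-x)]
      have hexp : Complex.exp (↑(Real.log x) * b) * Complex.exp (↑(Real.log (1-x)) * (-b))
          = Complex.exp ((a*v : ℝ) * Complex.I) := by
        rw [← Complex.exp_add]
        congr 1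
        have hc : ((Real.log x - Real.log (1-x) : ℝ) : ℂ) = ((2*v : ℝ) : ℂ) := by
          exact_mod_cast congrArg (fun t : ℝ => (t:ℂ)) hlog
        push_cast at hc ⊢
        rw [hbdef]
        linear_combination ((a:ℂ)*Complex.I/2) * hc
      calc (x:ℂ) * Complex.exp (↑(Real.log x) * b) * (((1-x:ℝ):ℂ) * Complex.exp (↑(Real.log (1-x)) * (-b)))
          = (x:ℂ) * ((1-x:ℝ):ℂ) * (Complex.exp (↑(Real.log x) * b) * Complex.exp (↑(Real.log (1-x)) * (-b))) := by ring
        _ = (x:ℂ) * ((1-x:ℝ):ℂ) * Complex.exp ((a*v : ℝ) * Complex.I) := by rw [hexp]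
    -- phi' value
    have hφ'v : φ' v = 2*x*(1-x) := by
      simp only [hφ'def]
      rw [← hEdef, h1x, hxdef]
      have hne : (1:ℝ) + E ≠ 0 := by positivity
      field_simp
    have hφ'pos : 0 < φ' v := by rw [hφ'v]; nlinarith
    have hφv : φ v = x := rfl
    rw [abs_of_pos hφ'pos, hφv, hGdef]
    simp only
    rw [Complex.real_smul, hcpow, hφ'v]
    have h2x1 : 2*(x:ℂ) - 1 = ((Real.tanh v : ℝ) : ℂ) := by
      rw [htanh]; push_cast; ring
    rw [h2x1]
    have hs4 : (1/Real.cosh v)^4 = (4*x*(1-x))^2 := by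
      rw [← hsech]; ring
    rw [hs4]
    push_cast
    ring
  -- change of variables
  have hcv := MeasureTheory.integral_image_eq_integral_abs_deriv_smul MeasurableSet.univ
    (fun x _ => (hderiv x).hasDerivWithinAt) hinj G
  rw [himg] at hcv
  rw [hcv]
  simp only [Measure.restrict_univ]
  rw [show (fun v => |φ' v| • G (φ v)) = fun v => (8:ℂ)⁻¹ * (Complex.exp ((a*v : ℝ) * Complex.I)
      * ((Real.tanh v ^ 2 * (1/Real.cosh v)^4 : ℝ) : ℂ)) from funext hpt]
  rw [MeasureTheory.integral_const_mul]
lemma hx_e1 (a s : ℝ) (hs : s ≠ 0) :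
    ((a:ℂ)*Complex.I/2) * (↑Real.pi / (((s : ℝ) : ℂ) * Complex.I))
      = ((Real.pi * a / (2 * s) : ℝ) : ℂ) := by
  have hsc : ((s:ℝ):ℂ) ≠ 0 := Complex.ofReal_ne_zero.mpr hs
  rw [div_mul_eq_div_div, Complex.div_I]
  push_cast
  field_simp
  linear_combination (-(a:ℂ)) * Complex.I_sq


end

/-- For every a ∈ ℝ, the function `v ↦ cos(a·v)·tanh(v)²·sech(v)⁴`
is integrable on ℝ and
`∫ cos(a·v)·tanh(v)²·sech(v)⁴ dv = π·a·(a² + 4)·(4 − a²)/(120·sinh(π·a/2))`,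
where for a = 0 the right-hand side is interpreted as its limit 4/15. -/
theorem fourier_integral_cos_tanh_sq_sech_fourth (a : ℝ) :
    Integrable (fun v : ℝ => Real.cos (a * v) * (Real.tanh v) ^ 2 * (1 / Real.cosh v) ^ 4) ∧
    (a ≠ 0 → ∫ v : ℝ, Real.cos (a * v) * (Real.tanh v) ^ 2 * (1 / Real.cosh v) ^ 4 =
      Real.pi * a * (a ^ 2 + 4) * (4 - a ^ 2) / (120 * Real.sinh (Real.pi * a / 2))) ∧
    (a = 0 → ∫ v : ℝ, Real.cos (a * v) * (Real.tanh v) ^ 2 * (1 / Real.cosh v) ^ 4 =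
      4 / 15) := by
  have hI1 : Integrable (fun v : ℝ => Real.cos (a*v) * Real.tanh v ^ 2 * (1/Real.cosh v)^4) :=
    hx_integrable_aux (Real.continuous_cos.comp (continuous_const.mul continuous_id))
      (fun v => Real.abs_cos_le_one _)
  have hI2 : Integrable (fun v : ℝ => Real.sin (a*v) * Real.tanh v ^ 2 * (1/Real.cosh v)^4) :=
    hx_integrable_aux (Real.continuous_sin.comp (continuous_const.mul continuous_id))
      (fun v => Real.abs_sin_le_one _)
  have hodd : ∫ v : ℝ, Real.sin (a*v) * Real.tanh v ^ 2 * (1/Real.cosh v)^4 = 0 := by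
    have h := MeasureTheory.integral_neg_eq_self
      (fun v : ℝ => Real.sin (a*v) * Real.tanh v ^ 2 * (1/Real.cosh v)^4) volume
    simp only [mul_neg, Real.sin_neg, Real.tanh_neg, Real.cosh_neg, neg_sq, neg_mul] at h
    rw [MeasureTheory.integral_neg] at h
    linarith
  have hsplit : (∫ v : ℝ, Complex.exp ((a*v : ℝ) * Complex.I)
        * ((Real.tanh v ^ 2 * (1/Real.cosh v)^4 : ℝ) : ℂ))
      = ((∫ v : ℝ, Real.cos (a*v) * Real.tanh v ^ 2 * (1/Real.cosh v)^4 : ℝ) : ℂ) := by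
    have hfun : (fun v : ℝ => Complex.exp ((a*v : ℝ) * Complex.I)
          * ((Real.tanh v ^ 2 * (1/Real.cosh v)^4 : ℝ) : ℂ))
        = fun v : ℝ => ((Real.cos (a*v) * Real.tanh v ^ 2 * (1/Real.cosh v)^4 : ℝ) : ℂ)
          + ((Real.sin (a*v) * Real.tanh v ^ 2 * (1/Real.cosh v)^4 : ℝ) : ℂ) * Complex.I := by
      funext v
      rw [Complex.exp_mul_I]
      push_cast
      ring
    have hI1c : Integrable (fun v : ℝ =>
        ((Real.cos (a*v) * Real.tanh v ^ 2 * (1/Real.cosh v)^4 : ℝ) : ℂ)) := hI1.ofReal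
    have hI2c : Integrable (fun v : ℝ =>
        ((Real.sin (a*v) * Real.tanh v ^ 2 * (1/Real.cosh v)^4 : ℝ) : ℂ) * Complex.I) :=
      hI2.ofReal.mul_const _
    have h1 : (∫ v : ℝ, ((Real.cos (a*v) * Real.tanh v ^ 2 * (1/Real.cosh v)^4 : ℝ) : ℂ))
        = ((∫ v : ℝ, Real.cos (a*v) * Real.tanh v ^ 2 * (1/Real.cosh v)^4 : ℝ) : ℂ) :=
      integral_ofReal
    have h2 : (∫ v : ℝ, ((Real.sin (a*v) * Real.tanh v ^ 2 * (1/Real.cosh v)^4 : ℝ) : ℂ))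
        = ((0 : ℝ) : ℂ) := by rw [← hodd]; exact integral_ofReal
    rw [hfun, MeasureTheory.integral_add hI1c hI2c, MeasureTheory.integral_mul_const, h1, h2]
    simp
  set b : ℂ := (a:ℂ)*Complex.I/2 with hbdef
  have hbre : b.re = 0 := by simp [hbdef]
  have hIoc : (∫ x in (0:ℝ)..1, (x:ℂ) ^ (1+b) * (1 - (x:ℂ)) ^ (1-b) * (2*(x:ℂ) - 1)^2)
      = ∫ x in Set.Ioo (0:ℝ) 1, (x:ℂ) ^ (1+b) * (1 - (x:ℂ)) ^ (1-b) * (2*(x:ℂ) - 1)^2 := by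
    rw [intervalIntegral.integral_of_le zero_le_one, MeasureTheory.integral_Ioc_eq_integral_Ioo]
  have hcov := hx_cov a
  have hkey : ((∫ v : ℝ, Real.cos (a*v) * Real.tanh v ^ 2 * (1/Real.cosh v)^4 : ℝ) : ℂ)
      = 8 * (Complex.Gamma (1+b) * Complex.Gamma (1-b) * ((1-b^2)*(1+b^2)) / 30) := by
    rw [← hsplit]
    calc (∫ v : ℝ, Complex.exp ((a*v : ℝ) * Complex.I)
          * ((Real.tanh v ^ 2 * (1/Real.cosh v)^4 : ℝ) : ℂ))
        = 8 * ((8:ℂ)⁻¹ * ∫ v : ℝ, Complex.exp ((a*v : ℝ) * Complex.I)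
          * ((Real.tanh v ^ 2 * (1/Real.cosh v)^4 : ℝ) : ℂ)) := by
          rw [← mul_assoc]; norm_num
      _ = 8 * ∫ x in Set.Ioo (0:ℝ) 1, (x:ℂ) ^ (1+b) * (1 - (x:ℂ)) ^ (1-b) * (2*(x:ℂ) - 1)^2 := by
          rw [← hcov]
      _ = 8 * ∫ x in (0:ℝ)..1, (x:ℂ) ^ (1+b) * (1 - (x:ℂ)) ^ (1-b) * (2*(x:ℂ) - 1)^2 := by
          rw [hIoc]
      _ = 8 * (Complex.Gamma (1+b) * Complex.Gamma (1-b) * ((1-b^2)*(1+b^2)) / 30) := by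
          rw [hx_beta_eval hbre]
  refine ⟨hI1, ?_, ?_⟩
  · intro ha
    have hb0 : b ≠ 0 := by
      simp only [hbdef, div_ne_zero_iff, mul_ne_zero_iff]
      exact ⟨⟨Complex.ofReal_ne_zero.mpr ha, Complex.I_ne_zero⟩, two_ne_zero⟩
    have hrefl : Complex.Gamma (1+b) * Complex.Gamma (1-b)
        = b * (↑Real.pi / Complex.sin (↑Real.pi * b)) := by
      rw [show (1:ℂ)+b = b+1 by ring, Complex.Gamma_add_one _ hb0, mul_assoc,
        Complex.Gamma_mul_Gamma_one_sub]
    have hsin : Complex.sin (↑Real.pi * b) = ((Real.sinh (Real.pi*a/2) : ℝ) : ℂ) * Complex.I := by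
      rw [show (↑Real.pi * b) = ((Real.pi*a/2 : ℝ) : ℂ) * Complex.I by rw [hbdef]; push_cast; ring,
        Complex.sin_mul_I]
      norm_cast
    have hs : Real.sinh (Real.pi*a/2) ≠ 0 := by
      rw [Real.sinh_ne_zero]
      exact div_ne_zero (mul_ne_zero Real.pi_ne_zero ha) two_ne_zero
    have hsc : ((Real.sinh (Real.pi*a/2) : ℝ) : ℂ) ≠ 0 := Complex.ofReal_ne_zero.mpr hs
    have e1 : b * (↑Real.pi / (((Real.sinh (Real.pi*a/2) : ℝ) : ℂ) * Complex.I))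
        = ((Real.pi * a / (2 * Real.sinh (Real.pi*a/2)) : ℝ) : ℂ) := by
      rw [hbdef]
      exact hx_e1 a _ hs
    have hb2 : b^2 = -((a:ℂ)^2/4) := by
      rw [hbdef, div_pow, mul_pow, Complex.I_sq]; ring
    have e2 : ((1:ℂ) - b^2) * (1+b^2) = (((1+a^2/4) * (1-a^2/4) : ℝ) : ℂ) := by
      rw [hb2]; push_cast; ring
    have final : ((∫ v : ℝ, Real.cos (a*v) * Real.tanh v ^ 2 * (1/Real.cosh v)^4 : ℝ) : ℂ)
        = ((Real.pi * a * (a^2+4)*(4-a^2) / (120*Real.sinh (Real.pi*a/2)) : ℝ) : ℂ) := by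
      rw [hkey, hrefl, hsin, e1, e2]
      rw [show ((8:ℂ)) * (((Real.pi * a / (2 * Real.sinh (Real.pi*a/2)) : ℝ) : ℂ)
          * (((1+a^2/4) * (1-a^2/4) : ℝ) : ℂ) / 30)
        = (((8 * (Real.pi * a / (2 * Real.sinh (Real.pi*a/2)) * ((1+a^2/4) * (1-a^2/4)) / 30)) : ℝ) : ℂ)
          by push_cast; ring]
      norm_cast
      field_simp
      ring
    exact_mod_cast final
  · intro ha
    have hb0 : b = 0 := by simp [hbdef, ha]
    rw [hb0] at hkey
    simp only [add_zero, sub_zero, ne_eq, OfNat.ofNat_ne_zero, not_false_eq_true, zero_pow,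
      Complex.Gamma_one, one_mul, mul_one] at hkey
    have : ((∫ v : ℝ, Real.cos (a*v) * Real.tanh v ^ 2 * (1/Real.cosh v)^4 : ℝ) : ℂ)
        = (((4:ℝ)/15 : ℝ) : ℂ) := by
      rw [hkey]; norm_num
    exact_mod_cast this
end
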